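/- Under the hypotheses of the partitioned CSSP setting, with ζ = max_i (1 + ‖C_i†‖₂ ‖V_i‖₂) and 𝒢 = Σ_{i=1}^k ‖(I_m − Û_i Û_i^T)V_i‖_F² the partition energy, the column-ID error satisfies ‖(I_m − CC†)A‖_F ≤ ζ √𝒢. -/

import Mathlib

open Matrix BigOperators

/-- The Frobenius norm of a real matrix. -/
noncomputable def frobNorm {m n : Type*} [Fintype m] [Fintype n] (M : Matrix m n ℝ) : ℝ :=
  Real.sqrt (∑ i, ∑ j, (M i j) ^ 2)

/-- The spectral (ℓ²-operator) norm of a real matrix. -/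
noncomputable def specNorm {m n : Type*} [Fintype m] [Fintype n] [DecidableEq n]
    (M : Matrix m n ℝ) : ℝ :=
  ‖LinearMap.toContinuousLinearMap (Matrix.toEuclideanLin M)‖

/-- Moore–Penrose pseudoinverse of a full-column-rank matrix: `(MᵀM)⁻¹Mᵀ`. -/
noncomputable def pinvFR {m n : Type*} [Fintype m] [Fintype n] [DecidableEq n]
    (M : Matrix m n ℝ) : Matrix n m ℝ :=
  (Mᵀ * M)⁻¹ * Mᵀ

/-- The Euclidean norm of a real vector. -/
noncomputable def euclNorm {n : Type*} [Fintype n] (x : n → ℝ) : ℝ :=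
  Real.sqrt (∑ i, (x i) ^ 2)

section basic
variable {m n p : Type*} [Fintype m] [Fintype n] [Fintype p]

lemma frobNorm_nonneg (M : Matrix m n ℝ) : 0 ≤ frobNorm M := Real.sqrt_nonneg _

lemma frobNorm_sq (M : Matrix m n ℝ) : frobNorm M ^ 2 = ∑ i, ∑ j, (M i j) ^ 2 := by
  rw [frobNorm, Real.sq_sqrt]
  positivity

lemma specNorm_nonneg [DecidableEq n] (M : Matrix m n ℝ) : 0 ≤ specNorm M := norm_nonneg _

open scoped Matrix.Norms.L2Operator in
lemma specNorm_eq_l2 [DecidableEq n] (M : Matrix m n ℝ) : specNorm M = ‖M‖ := rfl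

open scoped Matrix.Norms.L2Operator in
lemma specNorm_transpose [DecidableEq m] [DecidableEq n] (M : Matrix m n ℝ) :
    specNorm Mᵀ = specNorm M := by
  rw [specNorm_eq_l2, specNorm_eq_l2, ← Matrix.l2_opNorm_conjTranspose M]
  congr 1


end basic

section norms
variable {m n p : Type*} [Fintype m] [Fintype n] [Fintype p]

lemma frobNorm_eq_norm (M : Matrix m n ℝ) :
    frobNorm M = ‖(EuclideanSpace.equiv (m × n) ℝ).symm (fun q => M q.1 q.2)‖ := by
  rw [EuclideanSpace.norm_eq, frobNorm]
  congr 1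
  rw [← Fintype.sum_prod_type']
  apply Finset.sum_congr rfl
  intro q _
  rw [Real.norm_eq_abs, sq_abs]
  rfl

lemma frobNorm_add_le (M N : Matrix m n ℝ) :
    frobNorm (M + N) ≤ frobNorm M + frobNorm N := by
  rw [frobNorm_eq_norm, frobNorm_eq_norm, frobNorm_eq_norm]
  refine le_trans (le_of_eq ?_) (norm_add_le ((EuclideanSpace.equiv (m × n) ℝ).symm (fun q => M q.1 q.2)) ((EuclideanSpace.equiv (m × n) ℝ).symm (fun q => N q.1 q.2)))
  rw [← map_add]
  rfl

open scoped Matrix.Norms.L2Operator in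
lemma frobNorm_mul_le_spec [DecidableEq n] [DecidableEq m] [DecidableEq p] (A : Matrix m n ℝ) (B : Matrix n p ℝ) :
    frobNorm (A * B) ≤ frobNorm A * specNorm B := by
  rw [← specNorm_transpose]
  have key : ∀ i, ∑ j, ((A * B) i j) ^ 2 ≤ (specNorm Bᵀ) ^ 2 * ∑ k, (A i k) ^ 2 := by
    intro i
    have h := Matrix.l2_opNorm_mulVec Bᵀ ((EuclideanSpace.equiv n ℝ).symm (A i))
    rw [← specNorm_eq_l2] at h
    have h2 := mul_self_le_mul_self (norm_nonneg _) h
    rw [EuclideanSpace.norm_eq, EuclideanSpace.norm_eq] at h2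
    rw [Real.mul_self_sqrt (by positivity)] at h2
    calc ∑ j, ((A * B) i j) ^ 2 = ∑ j, ‖(Bᵀ *ᵥ ((EuclideanSpace.equiv n ℝ).symm (A i))) j‖ ^ 2 := by
          apply Finset.sum_congr rfl
          intro j _
          rw [Real.norm_eq_abs, sq_abs]
          simp only [Matrix.mul_apply, Matrix.mulVec, dotProduct, Matrix.transpose_apply]
          congr 1
          exact Finset.sum_congr rfl fun k _ => mul_comm _ _
      _ ≤ (specNorm Bᵀ * Real.sqrt (∑ k, ‖(EuclideanSpace.equiv n ℝ).symm (A i) k‖ ^ 2)) ^ 2 := by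
          rw [sq]; exact h2
      _ = (specNorm Bᵀ) ^ 2 * ∑ k, (A i k) ^ 2 := by
          rw [mul_pow, Real.sq_sqrt (by positivity)]
          congr 1
          apply Finset.sum_congr rfl
          intro k _
          rw [Real.norm_eq_abs, sq_abs]
          rfl
  have htot : frobNorm (A * B) ^ 2 ≤ (frobNorm A * specNorm Bᵀ) ^ 2 := by
    rw [frobNorm_sq, mul_pow, frobNorm_sq, mul_comm (∑ i, ∑ j, A i j ^ 2), Finset.mul_sum]
    exact Finset.sum_le_sum fun i _ => key i
  have h1 := frobNorm_nonneg (A * B)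
  have h2 : 0 ≤ frobNorm A * specNorm Bᵀ :=
    mul_nonneg (frobNorm_nonneg A) (specNorm_nonneg Bᵀ)
  nlinarith

end norms

section trace
variable {m n d : Type*} [Fintype m] [Fintype n] [Fintype d]

lemma frobNorm_sq_eq_trace (M : Matrix m n ℝ) : frobNorm M ^ 2 = (Mᵀ * M).trace := by
  rw [frobNorm_sq, Matrix.trace]
  rw [Finset.sum_comm]
  apply Finset.sum_congr rfl
  intro j _
  simp [Matrix.diag, Matrix.mul_apply, sq]

lemma my_le_of_sq_le_sq {a b : ℝ} (ha : 0 ≤ a) (hb : 0 ≤ b) (h : a ^ 2 ≤ b ^ 2) : a ≤ b := by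
  nlinarith

lemma my_eq_of_sq_eq_sq {a b : ℝ} (ha : 0 ≤ a) (hb : 0 ≤ b) (h : a ^ 2 = b ^ 2) : a = b := by
  nlinarith

/-- For a symmetric idempotent `P`, `‖(1-P)X‖_F² = ‖X‖_F² − ‖PX‖_F²`. -/
lemma frobNorm_one_sub_proj_sq [DecidableEq m] (P : Matrix m m ℝ) (hPt : Pᵀ = P)
    (hPP : P * P = P) (X : Matrix m n ℝ) :
    frobNorm ((1 - P) * X) ^ 2 = frobNorm X ^ 2 - frobNorm (P * X) ^ 2 := by
  rw [frobNorm_sq_eq_trace, frobNorm_sq_eq_trace, frobNorm_sq_eq_trace]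
  have key : ((1 - P) * X)ᵀ * ((1 - P) * X) = Xᵀ * X - (P * X)ᵀ * (P * X) := by
    rw [Matrix.transpose_mul, Matrix.transpose_mul, Matrix.transpose_sub, Matrix.transpose_one,
      hPt]
    have h1 : (1 - P) * ((1 - P) * X) = (1 - P) * X := by
      rw [← Matrix.mul_assoc]
      congr 1
      simp only [Matrix.sub_mul, Matrix.mul_sub, Matrix.one_mul, Matrix.mul_one, hPP]
      abel
    rw [Matrix.mul_assoc, h1]
    have h2 : Xᵀ * P * (P * X) = Xᵀ * (P * X) := by
      rw [Matrix.mul_assoc, ← Matrix.mul_assoc P, hPP]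
    rw [h2, ← Matrix.mul_sub]
    congr 1
    rw [Matrix.sub_mul, Matrix.one_mul]
  rw [key, Matrix.trace_sub]

lemma frobNorm_one_sub_proj_le [DecidableEq m] (P : Matrix m m ℝ) (hPt : Pᵀ = P)
    (hPP : P * P = P) (X : Matrix m n ℝ) :
    frobNorm ((1 - P) * X) ≤ frobNorm X := by
  apply my_le_of_sq_le_sq (frobNorm_nonneg _) (frobNorm_nonneg _)
  rw [frobNorm_one_sub_proj_sq P hPt hPP X]
  have := sq_nonneg (frobNorm (P * X))
  nlinarith [sq_nonneg (frobNorm (P * X))]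

/-- Projection-swap: for symmetric idempotents with equal trace,
`‖(1-P)Q‖_F = ‖(1-Q)P‖_F`. -/
lemma frobNorm_proj_swap [DecidableEq m] (P Q : Matrix m m ℝ) (hPt : Pᵀ = P) (hPP : P * P = P)
    (hQt : Qᵀ = Q) (hQQ : Q * Q = Q) (htr : P.trace = Q.trace) :
    frobNorm ((1 - P) * Q) = frobNorm ((1 - Q) * P) := by
  apply my_eq_of_sq_eq_sq (frobNorm_nonneg _) (frobNorm_nonneg _)
  rw [frobNorm_one_sub_proj_sq P hPt hPP Q, frobNorm_one_sub_proj_sq Q hQt hQQ P]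
  rw [frobNorm_sq_eq_trace, frobNorm_sq_eq_trace, frobNorm_sq_eq_trace, frobNorm_sq_eq_trace]
  rw [hQt, hQQ, hPt, hPP]
  have h1 : (P * Q)ᵀ * (P * Q) = Q * (P * Q) := by
    rw [Matrix.transpose_mul, hPt, hQt, Matrix.mul_assoc, ← Matrix.mul_assoc P P Q, hPP]
  have h2 : (Q * P)ᵀ * (Q * P) = P * (Q * P) := by
    rw [Matrix.transpose_mul, hPt, hQt, Matrix.mul_assoc, ← Matrix.mul_assoc Q Q P, hQQ]
  rw [h1, h2, htr]
  have h3 : (Q * (P * Q)).trace = (P * Q).trace := by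
    rw [Matrix.trace_mul_comm, Matrix.mul_assoc, hQQ]
  have h4 : (P * (Q * P)).trace = (P * Q).trace := by
    rw [Matrix.trace_mul_comm, Matrix.mul_assoc, hPP, Matrix.trace_mul_comm]
  rw [h3, h4]

end trace



section blocklemma
variable {M N D : Type*} [Fintype M] [Fintype N] [Fintype D]
  [DecidableEq M] [DecidableEq N] [DecidableEq D]

lemma rank_full_isUnit (C : Matrix M D ℝ) (h : C.rank = Fintype.card D) :
    IsUnit (Cᵀ * C).det := by
  have hr : (Cᵀ * C).rank = Fintype.card D := by
    rw [Matrix.rank_transpose_mul_self]; exact h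
  have hsurj : Function.Surjective (Cᵀ * C).mulVec := by
    have htop : LinearMap.range (Cᵀ * C).mulVecLin = ⊤ := by
      apply Submodule.eq_top_of_finrank_eq
      rw [← Matrix.rank, hr, Module.finrank_fintype_fun_eq_card]
    intro y
    obtain ⟨x, hx⟩ := LinearMap.range_eq_top.mp htop y
    exact ⟨x, hx⟩
  exact (Matrix.isUnit_iff_isUnit_det _).mp ((Matrix.mulVec_surjective_iff_isUnit).mp hsurj)

lemma pinv_mul_self (C : Matrix M D ℝ) (h : IsUnit (Cᵀ * C).det) :
    ((Cᵀ * C)⁻¹ * Cᵀ) * C = 1 := by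
  rw [Matrix.mul_assoc]
  exact Matrix.nonsing_inv_mul _ h

lemma mul_submatrix_col (B : Matrix M M ℝ) (V : Matrix M N ℝ) (f : D → N) :
    (B * V).submatrix id f = B * (V.submatrix id f) := by
  ext i j
  simp [Matrix.mul_apply, Matrix.submatrix_apply]

lemma frob_submatrix_col_le (V : Matrix M N ℝ) (f : D → N) (hf : Function.Injective f) :
    frobNorm (V.submatrix id f) ≤ frobNorm V := by
  apply Real.sqrt_le_sqrt
  apply Finset.sum_le_sum
  intro i _
  have : ∑ j : D, (V i (f j)) ^ 2 = ∑ j' ∈ Finset.univ.image f, (V i j') ^ 2 := by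
    rw [Finset.sum_image (fun a _ b _ hab => hf hab)]
  show ∑ j : D, (V i (f j)) ^ 2 ≤ _
  rw [this]
  apply Finset.sum_le_sum_of_subset_of_nonneg (Finset.subset_univ _)
  intro j' _ _
  positivity

end blocklemma

section mainblock
variable {M N D : Type*} [Fintype M] [Fintype N] [Fintype D]
  [DecidableEq M] [DecidableEq N] [DecidableEq D]

lemma block_bound (V : Matrix M N ℝ) (C : Matrix M D ℝ) (f : D → N)
    (hf : Function.Injective f) (hC : C = V.submatrix id f)
    (hrank : C.rank = Fintype.card D)
    (U : Matrix M D ℝ) (hU : Uᵀ * U = 1) :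
    frobNorm ((1 - C * pinvFR C) * V) ≤
      (1 + specNorm (pinvFR C) * specNorm V) * frobNorm ((1 - U * Uᵀ) * V) := by
  have hdet : IsUnit (Cᵀ * C).det := rank_full_isUnit C hrank
  have hpc : pinvFR C * C = 1 := pinv_mul_self C hdet
  set P : Matrix M M ℝ := C * pinvFR C with hP
  set Q : Matrix M M ℝ := U * Uᵀ with hQ
  set E : Matrix M N ℝ := (1 - Q) * V with hE
  have hPt : Pᵀ = P := by
    rw [hP]
    simp only [pinvFR]
    rw [Matrix.transpose_mul, Matrix.transpose_mul, Matrix.transpose_transpose,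
      Matrix.transpose_nonsing_inv, Matrix.transpose_mul, Matrix.transpose_transpose,
      Matrix.mul_assoc]
  have hPP : P * P = P := by
    rw [hP, Matrix.mul_assoc, ← Matrix.mul_assoc (pinvFR C), hpc, Matrix.one_mul]
  have hQt : Qᵀ = Q := by
    rw [hQ, Matrix.transpose_mul, Matrix.transpose_transpose]
  have hQQ : Q * Q = Q := by
    rw [hQ, Matrix.mul_assoc, ← Matrix.mul_assoc Uᵀ, hU, Matrix.one_mul]
  have htr : P.trace = Q.trace := by
    rw [hP, hQ, Matrix.trace_mul_comm, hpc, Matrix.trace_mul_comm U, hU]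
  -- decomposition
  have hdecomp : (1 - P) * V = (1 - P) * E + ((1 - P) * Q) * V := by
    rw [Matrix.mul_assoc, ← Matrix.mul_add]
    congr 1
    rw [hE, Matrix.sub_mul, Matrix.one_mul]
    abel
  have step2 : frobNorm ((1 - P) * V) ≤ frobNorm ((1 - P) * E) + frobNorm (((1 - P) * Q) * V) := by
    rw [hdecomp]; exact frobNorm_add_le _ _
  have step3 : frobNorm ((1 - P) * E) ≤ frobNorm E := frobNorm_one_sub_proj_le P hPt hPP E
  have step4 : frobNorm (((1 - P) * Q) * V) ≤ frobNorm ((1 - P) * Q) * specNorm V :=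
    frobNorm_mul_le_spec _ _
  have step5 : frobNorm ((1 - P) * Q) = frobNorm ((1 - Q) * P) :=
    frobNorm_proj_swap P Q hPt hPP hQt hQQ htr
  have step6 : (1 - Q) * P = (E.submatrix id f) * pinvFR C := by
    rw [hP, ← Matrix.mul_assoc]
    congr 1
    rw [hC, ← mul_submatrix_col, ← hE]
  have step7 : frobNorm ((E.submatrix id f) * pinvFR C) ≤ frobNorm E * specNorm (pinvFR C) :=
    le_trans (frobNorm_mul_le_spec _ _)
      (mul_le_mul_of_nonneg_right (frob_submatrix_col_le E f hf) (specNorm_nonneg _))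
  have hfE : 0 ≤ frobNorm E := frobNorm_nonneg E
  have hsV : 0 ≤ specNorm V := specNorm_nonneg V
  have hsC : 0 ≤ specNorm (pinvFR C) := specNorm_nonneg (pinvFR C)
  calc frobNorm ((1 - P) * V) ≤ frobNorm ((1 - P) * E) + frobNorm (((1 - P) * Q) * V) := step2
    _ ≤ frobNorm E + frobNorm ((1 - P) * Q) * specNorm V := add_le_add step3 step4
    _ = frobNorm E + frobNorm ((E.submatrix id f) * pinvFR C) * specNorm V := by
        rw [step5, step6]
    _ ≤ frobNorm E + (frobNorm E * specNorm (pinvFR C)) * specNorm V := by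
        apply add_le_add_right
        exact mul_le_mul_of_nonneg_right step7 hsV
    _ = (1 + specNorm (pinvFR C) * specNorm V) * frobNorm E := by ring

end mainblock

set_option maxHeartbeats 1000000 in
/-- with `ζ = maxᵢ (1 + ‖Cᵢ†‖₂‖Vᵢ‖₂)` and `𝒢 = Σᵢ ‖(I - ÛᵢÛᵢᵀ)Vᵢ‖_F²` the
partition energy, the column-ID error satisfies `‖(I - CC†)A‖_F ≤ ζ √𝒢`. -/
theorem partitioned_cssp_zeta_bound {m k : ℕ} (hk : 0 < k) (nn d : Fin k → ℕ)
    (A : Matrix (Fin m) ((i : Fin k) × Fin (nn i)) ℝ)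
    (C : Matrix (Fin m) ((i : Fin k) × Fin (d i)) ℝ)
    (hrankC : C.rank = Fintype.card ((i : Fin k) × Fin (d i)))
    (hsel : ∀ i, ∃ f : Fin (d i) → Fin (nn i), Function.Injective f ∧
      C.submatrix id (Sigma.mk i) = (A.submatrix id (Sigma.mk i)).submatrix id f)
    (hrankCi : ∀ i, (C.submatrix id (Sigma.mk i)).rank = d i)
    (Uh : (i : Fin k) → Matrix (Fin m) (Fin (d i)) ℝ)
    (hUh : ∀ i, (Uh i)ᵀ * Uh i = 1)
    (hEY : ∀ i, ∀ P : Matrix (Fin m) (Fin (d i)) ℝ, Pᵀ * P = 1 →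
      frobNorm ((1 - Uh i * (Uh i)ᵀ) * A.submatrix id (Sigma.mk i)) ≤
        frobNorm ((1 - P * Pᵀ) * A.submatrix id (Sigma.mk i)))
    (hdom : ∀ i, frobNorm ((1 - C * pinvFR C) * A.submatrix id (Sigma.mk i)) ≤
      frobNorm ((1 - C.submatrix id (Sigma.mk i) * pinvFR (C.submatrix id (Sigma.mk i))) *
        A.submatrix id (Sigma.mk i)))
    (ζ : ℝ) (hζ : ζ = Finset.univ.sup' (Finset.univ_nonempty_iff.mpr ⟨⟨0, hk⟩⟩)
      (fun i => 1 + specNorm (pinvFR (C.submatrix id (Sigma.mk i))) *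
        specNorm (A.submatrix id (Sigma.mk i))))
    (G : ℝ) (hG : G = ∑ i, frobNorm ((1 - Uh i * (Uh i)ᵀ) * A.submatrix id (Sigma.mk i)) ^ 2) :
    frobNorm ((1 - C * pinvFR C) * A) ≤ ζ * Real.sqrt G := by
  set F : Matrix (Fin m) ((i : Fin k) × Fin (nn i)) ℝ := (1 - C * pinvFR C) * A with hF
  -- per-block bound
  have hζ0 : 0 ≤ ζ := by
    rw [hζ]
    refine le_trans ?_ (Finset.le_sup' (fun i => 1 +
      specNorm (pinvFR (C.submatrix id (Sigma.mk i))) *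
      specNorm (A.submatrix id (Sigma.mk i))) (Finset.mem_univ (⟨0, hk⟩ : Fin k)))
    have h1 := specNorm_nonneg (pinvFR (C.submatrix id (Sigma.mk (⟨0, hk⟩ : Fin k))))
    have h2 := specNorm_nonneg (A.submatrix id (Sigma.mk (⟨0, hk⟩ : Fin k)))
    nlinarith
  have hblock : ∀ i, frobNorm (F.submatrix id (Sigma.mk i)) ≤
      ζ * frobNorm ((1 - Uh i * (Uh i)ᵀ) * A.submatrix id (Sigma.mk i)) := by
    intro i
    obtain ⟨f, hf, hCi⟩ := hsel i
    have hrk : (C.submatrix id (Sigma.mk i)).rank = Fintype.card (Fin (d i)) := by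
      rw [Fintype.card_fin]; exact hrankCi i
    have hb := block_bound (A.submatrix id (Sigma.mk i)) (C.submatrix id (Sigma.mk i)) f hf hCi
      hrk (Uh i) (hUh i)
    have hsub : F.submatrix id (Sigma.mk i) =
        (1 - C * pinvFR C) * (A.submatrix id (Sigma.mk i)) := by
      rw [hF, mul_submatrix_col]
    rw [hsub]
    have hzi : 1 + specNorm (pinvFR (C.submatrix id (Sigma.mk i))) *
        specNorm (A.submatrix id (Sigma.mk i)) ≤ ζ := by
      rw [hζ]
      exact Finset.le_sup' (fun i => 1 +
        specNorm (pinvFR (C.submatrix id (Sigma.mk i))) *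
        specNorm (A.submatrix id (Sigma.mk i))) (Finset.mem_univ i)
    calc frobNorm ((1 - C * pinvFR C) * A.submatrix id (Sigma.mk i))
        ≤ frobNorm ((1 - C.submatrix id (Sigma.mk i) * pinvFR (C.submatrix id (Sigma.mk i))) *
          A.submatrix id (Sigma.mk i)) := hdom i
      _ ≤ (1 + specNorm (pinvFR (C.submatrix id (Sigma.mk i))) *
          specNorm (A.submatrix id (Sigma.mk i))) *
          frobNorm ((1 - Uh i * (Uh i)ᵀ) * A.submatrix id (Sigma.mk i)) := hb
      _ ≤ ζ * frobNorm ((1 - Uh i * (Uh i)ᵀ) * A.submatrix id (Sigma.mk i)) :=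
          mul_le_mul_of_nonneg_right hzi (frobNorm_nonneg _)
  -- column split
  have hsplit : frobNorm F ^ 2 = ∑ i, frobNorm (F.submatrix id (Sigma.mk i)) ^ 2 := by
    rw [frobNorm_sq]
    have : ∀ r, ∑ j : (i : Fin k) × Fin (nn i), (F r j) ^ 2 =
        ∑ i, ∑ j : Fin (nn i), (F r ⟨i, j⟩) ^ 2 := by
      intro r
      rw [← Finset.univ_sigma_univ, Finset.sum_sigma]
    simp_rw [this]
    rw [Finset.sum_comm]
    apply Finset.sum_congr rfl
    intro i _
    rw [frobNorm_sq]
    rfl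
  -- combine
  have hsq : frobNorm F ^ 2 ≤ ζ ^ 2 * G := by
    rw [hsplit, hG, Finset.mul_sum]
    apply Finset.sum_le_sum
    intro i _
    have h1 := hblock i
    have h2 := frobNorm_nonneg (F.submatrix id (Sigma.mk i))
    rw [← mul_pow]
    exact pow_le_pow_left₀ h2 h1 2
  have hGnn : 0 ≤ G := by
    rw [hG]
    exact Finset.sum_nonneg fun i _ => sq_nonneg _
  calc frobNorm F = Real.sqrt (frobNorm F ^ 2) := (Real.sqrt_sq (frobNorm_nonneg F)).symm
    _ ≤ Real.sqrt (ζ ^ 2 * G) := Real.sqrt_le_sqrt hsq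
    _ = ζ * Real.sqrt G := by
        rw [Real.sqrt_mul (sq_nonneg ζ), Real.sqrt_sq hζ0]
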